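/- Fix a positive integer k, let λ, μ ∈ (0,k) and ν ∈ [0,k]. The set {θ ∈ [0, π/2] : t_λ · e^{iθσ₂} · t_μ · e^{−iθσ₂} ∈ C_ν} contains at most one element, and it is nonempty if and only if |λ−μ| ≤ ν ≤ min(λ+μ, 2k−λ−μ). -/

import Mathlib

open Matrix Complex Real

noncomputable section

/-- `SU(2)`: 2×2 complex unitary matrices with determinant 1. -/
def SU2 : Set (Matrix (Fin 2) (Fin 2) ℂ) :=
  {g | g ∈ Matrix.unitaryGroup (Fin 2) ℂ ∧ g.det = 1}

/-- The diagonal matrix `t_λ = diag(exp(iπλ/k), exp(−iπλ/k))`. -/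
def tmat (k : ℕ) (l : ℝ) : Matrix (Fin 2) (Fin 2) ℂ :=
  Matrix.diagonal ![Complex.exp (Complex.I * ((Real.pi * l / k : ℝ) : ℂ)),
    Complex.exp (-(Complex.I * ((Real.pi * l / k : ℝ) : ℂ)))]

/-- The conjugacy class `C_λ` of `t_λ` in `SU(2)`. -/
def conjClass (k : ℕ) (l : ℝ) : Set (Matrix (Fin 2) (Fin 2) ℂ) :=
  {g | ∃ x ∈ SU2, g = x * tmat k l * x⁻¹}

/-- `T_{λ,μ}^ν = {(g,h) : g ∈ C_λ, h ∈ C_μ, g·h ∈ C_ν}`. -/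
def Tset (k : ℕ) (l m n : ℝ) :
    Set (Matrix (Fin 2) (Fin 2) ℂ × Matrix (Fin 2) (Fin 2) ℂ) :=
  {p | p.1 ∈ conjClass k l ∧ p.2 ∈ conjClass k m ∧ p.1 * p.2 ∈ conjClass k n}

/-- The rotation matrix `e^{iθσ₂} = [[cos θ, sin θ],[−sin θ, cos θ]]`. -/
def rotY (θ : ℝ) : Matrix (Fin 2) (Fin 2) ℂ :=
  !![((Real.cos θ : ℝ) : ℂ), ((Real.sin θ : ℝ) : ℂ);
     ((-(Real.sin θ) : ℝ) : ℂ), ((Real.cos θ : ℝ) : ℂ)]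

lemma tmat_eq (k : ℕ) (l : ℝ) : tmat k l =
    !![Complex.exp (Complex.I * ((Real.pi * l / k : ℝ) : ℂ)), 0;
       0, Complex.exp (-(Complex.I * ((Real.pi * l / k : ℝ) : ℂ)))] := by
  ext i j
  fin_cases i <;> fin_cases j <;> simp [tmat, Matrix.diagonal]

lemma SU2_mul {a b : Matrix (Fin 2) (Fin 2) ℂ} (ha : a ∈ SU2) (hb : b ∈ SU2) :
    a * b ∈ SU2 :=
  ⟨mul_mem ha.1 hb.1, by rw [Matrix.det_mul, ha.2, hb.2, one_mul]⟩

lemma mem_SU2_of_entries (p q : ℂ) (h : p * starRingEnd ℂ p + q * starRingEnd ℂ q = 1) :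
    !![p, -(starRingEnd ℂ q); q, starRingEnd ℂ p] ∈ SU2 := by
  constructor
  · rw [Matrix.mem_unitaryGroup_iff]
    ext i j
    fin_cases i <;> fin_cases j <;>
      · simp [Matrix.mul_apply, Fin.sum_univ_two, Matrix.star_apply, Matrix.one_apply]
        ring_nf
        first
        | linear_combination h
        | linear_combination (starRingEnd ℂ).congr_arg h
        | skip
  · simp [Matrix.det_fin_two]
    linear_combination h

lemma exp_conj' (c : ℝ) : Complex.exp (-(Complex.I * (c:ℂ))) =
    starRingEnd ℂ (Complex.exp (Complex.I * (c:ℂ))) := by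
  rw [← Complex.exp_conj]; congr 1; simp [mul_comm]

lemma tmat_mem_SU2 (k : ℕ) (l : ℝ) : tmat k l ∈ SU2 := by
  rw [tmat_eq]
  have h := mem_SU2_of_entries (Complex.exp (Complex.I * ((Real.pi * l / k : ℝ) : ℂ))) 0 (by
    rw [← exp_conj' (Real.pi * l / k), ← Complex.exp_add]
    rw [show Complex.I * ((Real.pi * l / k : ℝ):ℂ) + -(Complex.I * ((Real.pi * l / k : ℝ):ℂ)) = 0 by ring]
    simp)
  rw [← exp_conj' (Real.pi * l / k)] at h
  simpa using h

lemma rotY_mem_SU2 (θ : ℝ) : rotY θ ∈ SU2 := by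
  have h := mem_SU2_of_entries ((Real.cos θ : ℝ) : ℂ) ((-(Real.sin θ) : ℝ) : ℂ) (by
    simp only [Complex.conj_ofReal, ← Complex.ofReal_mul, ← Complex.ofReal_add,
      ← Complex.ofReal_one]
    norm_cast
    ring_nf
    rw [add_comm]
    exact Real.sin_sq_add_cos_sq θ)
  have e : rotY θ = !![((Real.cos θ : ℝ) : ℂ), -(starRingEnd ℂ ((-(Real.sin θ) : ℝ) : ℂ));
      ((-(Real.sin θ) : ℝ) : ℂ), starRingEnd ℂ ((Real.cos θ : ℝ) : ℂ)] := by
    ext i j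
    fin_cases i <;> fin_cases j <;> simp [rotY, ← Complex.ofReal_sin, ← Complex.ofReal_cos, Complex.conj_ofReal]
  rw [e]; exact h

lemma exp_I_eq (c : ℝ) : Complex.exp (Complex.I * (c:ℂ)) = Complex.cos c + Complex.sin c * Complex.I := by
  rw [mul_comm]; exact Complex.exp_mul_I _
lemma exp_negI_eq (c : ℝ) : Complex.exp (-(Complex.I * (c:ℂ))) = Complex.cos c - Complex.sin c * Complex.I := by
  rw [show -(Complex.I * (c:ℂ)) = (-c:ℂ) * Complex.I by ring, Complex.exp_mul_I]
  simp [Complex.cos_neg, Complex.sin_neg]; ring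

lemma trace_tmat (k : ℕ) (l : ℝ) :
    (tmat k l).trace = 2 * ((Real.cos (Real.pi * l / k) : ℝ) : ℂ) := by
  rw [tmat_eq, Matrix.trace_fin_two]
  simp only [Matrix.of_apply, Matrix.cons_val', Matrix.cons_val_zero, Matrix.cons_val_one,
    Matrix.head_cons, Matrix.empty_val', Matrix.cons_val_fin_one, Matrix.head_fin_const]
  rw [exp_I_eq, exp_negI_eq, Complex.ofReal_cos]
  ring

lemma traceM (k : ℕ) (lam mu θ : ℝ) :
    (tmat k lam * rotY θ * tmat k mu * rotY (-θ)).trace =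
    2 * ((Real.cos (Real.pi * lam / k + Real.pi * mu / k) * Real.cos θ ^ 2 +
          Real.cos (Real.pi * lam / k - Real.pi * mu / k) * Real.sin θ ^ 2 : ℝ) : ℂ) := by
  rw [tmat_eq, tmat_eq]
  simp only [rotY, Real.cos_neg, Real.sin_neg, neg_neg, Matrix.mul_fin_two, Matrix.trace_fin_two,
    Matrix.of_apply, Matrix.cons_val', Matrix.cons_val_zero, Matrix.cons_val_one, Matrix.head_cons,
    Matrix.empty_val', Matrix.cons_val_fin_one, Matrix.head_fin_const]
  rw [exp_I_eq, exp_negI_eq, exp_I_eq, exp_negI_eq]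
  push_cast
  rw [Complex.cos_add, Complex.cos_sub]
  linear_combination (2 * Complex.sin ((Real.pi:ℂ) * (lam:ℂ) / (k:ℂ)) * Complex.sin ((Real.pi:ℂ) * (mu:ℂ) / (k:ℂ)) *
    ((Complex.cos (θ:ℂ))^2 - (Complex.sin (θ:ℂ))^2)) * Complex.I_sq

-- structure of SU2 elements
lemma SU2_entries {g : Matrix (Fin 2) (Fin 2) ℂ} (hg : g ∈ SU2) :
    g 1 1 = starRingEnd ℂ (g 0 0) ∧ g 1 0 = -(starRingEnd ℂ (g 0 1)) ∧
    g 0 0 * starRingEnd ℂ (g 0 0) + g 0 1 * starRingEnd ℂ (g 0 1) = 1 := by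
  have h1 : g * star g = 1 := Matrix.mem_unitaryGroup_iff.mp hg.1
  have hadj : g * g.adjugate = 1 := by
    rw [Matrix.mul_adjugate, hg.2, one_smul]
  have he : star g = g.adjugate := by
    rw [← Matrix.inv_eq_right_inv h1, ← Matrix.inv_eq_right_inv hadj]
  have e00 : star g 0 0 = g.adjugate 0 0 := by rw [he]
  have e01 : star g 0 1 = g.adjugate 0 1 := by rw [he]
  simp [Matrix.star_apply, Matrix.adjugate_fin_two] at e00 e01
  refine ⟨e00.symm, ?_, ?_⟩
  · have h2 := congrArg (starRingEnd ℂ) e01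
    simpa using h2
  · have := congrFun (congrFun h1 0) 0
    simpa [Matrix.mul_apply, Fin.sum_univ_two, Matrix.star_apply, Matrix.one_apply] using this


lemma one_mem_SU2 : (1 : Matrix (Fin 2) (Fin 2) ℂ) ∈ SU2 := ⟨one_mem _, Matrix.det_one⟩

lemma one_fin_two' : (1 : Matrix (Fin 2) (Fin 2) ℂ) = !![1,0;0,1] := Matrix.one_fin_two

lemma xinv_eq (p : ℝ) (q : ℂ) (h1 : (p:ℂ)^2 + q * starRingEnd ℂ q = 1) :
    (!![(p:ℂ), -(starRingEnd ℂ q); q, starRingEnd ℂ (p:ℂ)])⁻¹ =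
      !![starRingEnd ℂ (p:ℂ), starRingEnd ℂ q; -q, (p:ℂ)] := by
  apply Matrix.inv_eq_right_inv
  rw [Matrix.mul_fin_two, one_fin_two', Complex.conj_ofReal]
  ext i j
  fin_cases i <;> fin_cases j <;>
    simp only [Fin.zero_eta, Fin.mk_one, Matrix.of_apply, Matrix.cons_val', Matrix.cons_val_zero,
      Matrix.cons_val_one, Matrix.head_cons, Matrix.empty_val', Matrix.cons_val_fin_one,
      Matrix.head_fin_const] <;>
    first
      | linear_combination h1
      | ring

lemma conj_formula (c s : ℝ) (p : ℝ) (q β : ℂ)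
    (h1 : ((p:ℝ):ℂ)^2 + q * starRingEnd ℂ q = 1)
    (h2 : ((Real.sin c : ℝ):ℂ) * (((p:ℝ):ℂ)^2 - q * starRingEnd ℂ q) = ((s:ℝ):ℂ))
    (h3 : 2 * ((Real.sin c : ℝ):ℂ) * ((p:ℝ):ℂ) * starRingEnd ℂ q * Complex.I = β) :
    !![((Real.cos c:ℝ):ℂ) + ((s:ℝ):ℂ) * Complex.I, β;
       -(starRingEnd ℂ β), ((Real.cos c:ℝ):ℂ) - ((s:ℝ):ℂ) * Complex.I] =
    !![((p:ℝ):ℂ), -(starRingEnd ℂ q); q, starRingEnd ℂ ((p:ℝ):ℂ)] *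
      !![Complex.exp (Complex.I * (c:ℂ)), 0; 0, Complex.exp (-(Complex.I * (c:ℂ)))] *
      !![starRingEnd ℂ ((p:ℝ):ℂ), starRingEnd ℂ q; -q, ((p:ℝ):ℂ)] := by
  have hβc : starRingEnd ℂ β = -(2 * ((Real.sin c : ℝ):ℂ) * ((p:ℝ):ℂ) * q * Complex.I) := by
    rw [← h3]
    simp only [_root_.map_mul, Complex.conj_ofReal, Complex.conj_I, Complex.conj_conj, map_ofNat]
    ring
  rw [exp_I_eq, exp_negI_eq, ← Complex.ofReal_cos, ← Complex.ofReal_sin,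
    Matrix.mul_fin_two, Matrix.mul_fin_two, Complex.conj_ofReal]
  ext i j
  fin_cases i <;> fin_cases j <;>
    simp only [Fin.zero_eta, Fin.mk_one, Matrix.of_apply, Matrix.cons_val', Matrix.cons_val_zero,
      Matrix.cons_val_one, Matrix.head_cons, Matrix.empty_val', Matrix.cons_val_fin_one,
      Matrix.head_fin_const]
  · linear_combination (-((Real.cos c : ℝ):ℂ)) * h1 - Complex.I * h2
  · linear_combination -h3
  · first
    | linear_combination hβc
    | linear_combination -hβc
  · linear_combination (-((Real.cos c : ℝ):ℂ)) * h1 + Complex.I * h2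

lemma mem_conjClass_of_trace (k : ℕ) (hk : 0 < k) (nu : ℝ) (hnu : nu ∈ Set.Icc (0:ℝ) k)
    {g : Matrix (Fin 2) (Fin 2) ℂ} (hg : g ∈ SU2)
    (htr : g.trace = 2 * ((Real.cos (Real.pi * nu / k) : ℝ) : ℂ)) :
    g ∈ conjClass k nu := by
  have hkR : (0:ℝ) < k := by exact_mod_cast hk
  set c : ℝ := Real.pi * nu / k with hcdef
  have hc0 : 0 ≤ c := div_nonneg (mul_nonneg Real.pi_pos.le hnu.1) hkR.le
  have hcpi : c ≤ π := by
    rw [hcdef, div_le_iff₀ hkR]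
    nlinarith [Real.pi_pos, hnu.2]
  have hsc : 0 ≤ Real.sin c := Real.sin_nonneg_of_nonneg_of_le_pi hc0 hcpi
  obtain ⟨h11, h10, hnorm⟩ := SU2_entries hg
  set α := g 0 0 with hα
  set β := g 0 1 with hβ
  set s := α.im with hs
  have hgeta : g = !![α, β; -(starRingEnd ℂ β), starRingEnd ℂ α] := by
    rw [Matrix.eta_fin_two g, h11, h10]
  have hre : α.re = Real.cos c := by
    rw [Matrix.trace_fin_two, h11, Complex.add_conj] at htr
    have : (2 * α.re : ℝ) = (2 * Real.cos c : ℝ) := by exact_mod_cast htr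
    linarith
  have halpha : α = ((Real.cos c : ℝ) : ℂ) + ((s:ℝ):ℂ) * Complex.I := by
    apply Complex.ext <;>
      simp only [Complex.add_re, Complex.add_im, Complex.ofReal_re, Complex.ofReal_im,
        Complex.mul_re, Complex.mul_im, Complex.I_re, Complex.I_im] <;>
      simp [hre, hs]
  have hconj : starRingEnd ℂ α = ((Real.cos c : ℝ) : ℂ) - ((s:ℝ):ℂ) * Complex.I := by
    rw [halpha]
    simp only [map_add, _root_.map_mul, Complex.conj_ofReal, Complex.conj_I]
    ring
  have hpyth : s ^ 2 + Complex.normSq β = Real.sin c ^ 2 := by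
    have h1 : (Complex.normSq α : ℂ) + (Complex.normSq β : ℂ) = 1 := by
      rw [← Complex.mul_conj, ← Complex.mul_conj]; exact hnorm
    have h2 : Complex.normSq α + Complex.normSq β = 1 := by exact_mod_cast h1
    have h3 : Complex.normSq α = Real.cos c ^ 2 + s ^ 2 := by
      rw [Complex.normSq_apply, hre]; ring
    have h4 := Real.sin_sq_add_cos_sq c
    linarith [h2, h3]
  by_cases hb0 : β = 0
  · -- diagonal case
    have hs2 : s ^ 2 = Real.sin c ^ 2 := by
      rw [hb0] at hpyth; simpa using hpyth
    rcases sq_eq_sq_iff_eq_or_eq_neg.mp hs2 with h | h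
    · refine ⟨1, one_mem_SU2, ?_⟩
      rw [inv_one, mul_one, one_mul, tmat_eq, ← hcdef, hgeta, hb0, hconj, halpha,
        exp_I_eq, exp_negI_eq, ← Complex.ofReal_cos, ← Complex.ofReal_sin, h]
      simp
    · refine ⟨!![0, -1; 1, 0], ?_, ?_⟩
      · have := mem_SU2_of_entries 0 1 (by simp)
        simpa using this
      · have hinv : (!![0, -1; 1, 0] : Matrix (Fin 2) (Fin 2) ℂ)⁻¹ = !![0, 1; -1, 0] := by
          apply Matrix.inv_eq_right_inv
          rw [Matrix.mul_fin_two, one_fin_two']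
          norm_num
        rw [hinv, tmat_eq, ← hcdef, hgeta, hb0, hconj, halpha,
          exp_I_eq, exp_negI_eq, ← Complex.ofReal_cos, ← Complex.ofReal_sin, h,
          Matrix.mul_fin_two, Matrix.mul_fin_two]
        ext i j
        fin_cases i <;> fin_cases j <;> (simp; try ring)
  · -- generic case
    have hnsβ : 0 < Complex.normSq β := Complex.normSq_pos.mpr hb0
    have hsinpos : 0 < Real.sin c := by nlinarith [hpyth, hsc, Complex.normSq_nonneg β]
    have habs : -Real.sin c < s ∧ s < Real.sin c := by constructor <;> nlinarith
    have hsum : 0 < Real.sin c + s := by linarith [habs.1]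
    set P : ℝ := (Real.sin c + s) / (2 * Real.sin c) with hPdef
    have hPpos : 0 < P := div_pos hsum (by linarith)
    set p : ℝ := Real.sqrt P with hpdef
    have hppos : 0 < p := Real.sqrt_pos.mpr hPpos
    have hp2 : p ^ 2 = P := Real.sq_sqrt hPpos.le
    have hden2 : (2 * Real.sin c * p) * (2 * Real.sin c * p) = 2 * Real.sin c * (Real.sin c + s) := by
      have h4 : (2 * Real.sin c * p) * (2 * Real.sin c * p) = 4 * Real.sin c ^ 2 * P := by
        rw [← hp2]; ring
      rw [h4, hPdef]
      field_simp
      ring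
    set q : ℂ := Complex.I * starRingEnd ℂ β / ((2 * Real.sin c * p : ℝ) : ℂ) with hqdef
    have hdenne : ((2 * Real.sin c * p : ℝ) : ℂ) ≠ 0 := by
      exact_mod_cast (by positivity : (2 * Real.sin c * p : ℝ) ≠ 0)
    have hβval : Complex.normSq β = Real.sin c ^ 2 - s ^ 2 := by linarith [hpyth]
    have hqq : q * starRingEnd ℂ q = (((Real.sin c - s) / (2 * Real.sin c) : ℝ) : ℂ) := by
      rw [Complex.mul_conj, hqdef, Complex.normSq_div, Complex.normSq_mul, Complex.normSq_I,
        Complex.normSq_conj, Complex.normSq_ofReal]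
      congr 1
      rw [hβval, one_mul, hden2]
      field_simp
      ring
    have h1 : ((p:ℝ):ℂ)^2 + q * starRingEnd ℂ q = 1 := by
      rw [hqq, ← Complex.ofReal_pow, ← Complex.ofReal_add, ← Complex.ofReal_one]
      congr 1
      rw [hp2, hPdef]
      field_simp
      ring
    have h2 : ((Real.sin c : ℝ):ℂ) * (((p:ℝ):ℂ)^2 - q * starRingEnd ℂ q) = ((s:ℝ):ℂ) := by
      rw [hqq, ← Complex.ofReal_pow, hp2, ← Complex.ofReal_sub, ← Complex.ofReal_mul]
      congr 1
      rw [hPdef]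
      field_simp
      ring
    have h3 : 2 * ((Real.sin c : ℝ):ℂ) * ((p:ℝ):ℂ) * starRingEnd ℂ q * Complex.I = β := by
      rw [hqdef]
      simp only [map_div₀, _root_.map_mul, Complex.conj_I, Complex.conj_conj, Complex.conj_ofReal]
      field_simp [hdenne]
      have hne : (2 * Complex.sin (c:ℂ) * ((p:ℝ):ℂ)) ≠ 0 := by
        rw [← Complex.ofReal_sin]
        exact_mod_cast (by positivity : (2 * Real.sin c * p : ℝ) ≠ 0)
      have e : ((2 * Real.sin c * p : ℝ) : ℂ) = 2 * ((Real.sin c : ℝ):ℂ) * ((p:ℝ):ℂ) := by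
        simp only [Complex.ofReal_mul, Complex.ofReal_ofNat]
      rw [e]
      linear_combination (-(2 * ((Real.sin c : ℝ):ℂ) * ((p:ℝ):ℂ))) * Complex.I_sq
    have hpq1 : ((p:ℝ):ℂ) * starRingEnd ℂ ((p:ℝ):ℂ) + q * starRingEnd ℂ q = 1 := by
      rw [Complex.conj_ofReal, ← sq]; exact h1
    refine ⟨!![((p:ℝ):ℂ), -(starRingEnd ℂ q); q, starRingEnd ℂ ((p:ℝ):ℂ)],
      mem_SU2_of_entries _ _ hpq1, ?_⟩
    rw [xinv_eq p q h1, tmat_eq, ← hcdef, hgeta, hconj, halpha]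
    exact conj_formula c s p q β h1 h2 h3


lemma trace_of_mem_conjClass {k : ℕ} {nu : ℝ} {g : Matrix (Fin 2) (Fin 2) ℂ}
    (h : g ∈ conjClass k nu) : g.trace = 2 * ((Real.cos (Real.pi * nu / k) : ℝ) : ℂ) := by
  obtain ⟨x, hx, rfl⟩ := h
  have hdet : IsUnit x.det := by rw [hx.2]; exact isUnit_one
  rw [Matrix.trace_mul_comm, ← mul_assoc, Matrix.nonsing_inv_mul x hdet, one_mul, trace_tmat]

lemma mem_iff (k : ℕ) (hk : 0 < k) (lam mu nu θ : ℝ) (hnu : nu ∈ Set.Icc (0:ℝ) k) :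
    tmat k lam * rotY θ * tmat k mu * rotY (-θ) ∈ conjClass k nu ↔
      Real.cos (Real.pi*lam/k + Real.pi*mu/k) * Real.cos θ ^ 2 +
        Real.cos (Real.pi*lam/k - Real.pi*mu/k) * Real.sin θ ^ 2 = Real.cos (Real.pi*nu/k) := by
  constructor
  · intro h
    have h1 := trace_of_mem_conjClass h
    rw [traceM] at h1
    have h2 : ((Real.cos (Real.pi*lam/k + Real.pi*mu/k) * Real.cos θ ^ 2 +
        Real.cos (Real.pi*lam/k - Real.pi*mu/k) * Real.sin θ ^ 2 : ℝ) : ℂ) =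
        ((Real.cos (Real.pi*nu/k) : ℝ) : ℂ) :=
      mul_left_cancel₀ two_ne_zero h1
    exact_mod_cast h2
  · intro h
    apply mem_conjClass_of_trace k hk nu hnu
    · exact SU2_mul (SU2_mul (SU2_mul (tmat_mem_SU2 _ _) (rotY_mem_SU2 _)) (tmat_mem_SU2 _ _))
        (rotY_mem_SU2 _)
    · rw [traceM, h]

lemma real_part (A B C : ℝ) (hAB : A < B) :
    ({θ ∈ Set.Icc (0:ℝ) (π/2) | A * Real.cos θ^2 + B * Real.sin θ^2 = C}).Subsingleton ∧
    (({θ ∈ Set.Icc (0:ℝ) (π/2) | A * Real.cos θ^2 + B * Real.sin θ^2 = C}).Nonempty ↔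
      A ≤ C ∧ C ≤ B) := by
  have hBA : B - A ≠ 0 := by linarith
  constructor
  · rintro θ₁ ⟨hI1, he1⟩ θ₂ ⟨hI2, he2⟩
    rw [Real.cos_sq'] at he1 he2
    have hs1 : 0 ≤ Real.sin θ₁ :=
      Real.sin_nonneg_of_nonneg_of_le_pi hI1.1 (by linarith [Real.pi_pos, hI1.2])
    have hs2 : 0 ≤ Real.sin θ₂ :=
      Real.sin_nonneg_of_nonneg_of_le_pi hI2.1 (by linarith [Real.pi_pos, hI2.2])
    have h3 : (B - A) * Real.sin θ₁ ^ 2 = (B - A) * Real.sin θ₂ ^ 2 := by linarith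
    have h4 : Real.sin θ₁ ^ 2 = Real.sin θ₂ ^ 2 := mul_left_cancel₀ hBA h3
    have h5 : Real.sin θ₁ = Real.sin θ₂ := by
      rw [← Real.sqrt_sq hs1, ← Real.sqrt_sq hs2, h4]
    exact Real.injOn_sin ⟨by linarith [Real.pi_pos, hI1.1], hI1.2⟩
      ⟨by linarith [Real.pi_pos, hI2.1], hI2.2⟩ h5
  · constructor
    · rintro ⟨θ, hI, he⟩
      rw [Real.cos_sq'] at he
      constructor <;> nlinarith [sq_nonneg (Real.sin θ), Real.sin_sq_le_one θ]
    · rintro ⟨h1, h2⟩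
      set r : ℝ := (C - A) / (B - A) with hrdef
      have hr0 : 0 ≤ r := div_nonneg (by linarith) (by linarith)
      have hr1 : r ≤ 1 := by rw [hrdef, div_le_one (by linarith)]; linarith
      refine ⟨Real.arcsin (Real.sqrt r), ⟨?_, ?_⟩, ?_⟩
      · exact Real.arcsin_nonneg.mpr (Real.sqrt_nonneg r)
      · exact Real.arcsin_le_pi_div_two _
      · have hs : Real.sin (Real.arcsin (Real.sqrt r)) = Real.sqrt r :=
          Real.sin_arcsin (by linarith [Real.sqrt_nonneg r]) (Real.sqrt_le_one.mpr hr1)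
        rw [Real.cos_sq', hs, Real.sq_sqrt hr0, hrdef]
        field_simp
        ring


theorem stmt6 (k : ℕ) (hk : 0 < k) (lam mu nu : ℝ)
    (hlam : lam ∈ Set.Ioo (0:ℝ) k) (hmu : mu ∈ Set.Ioo (0:ℝ) k)
    (hnu : nu ∈ Set.Icc (0:ℝ) k) :
    ({θ ∈ Set.Icc (0:ℝ) (Real.pi / 2) |
        tmat k lam * rotY θ * tmat k mu * rotY (-θ) ∈ conjClass k nu}).Subsingleton ∧
      (({θ ∈ Set.Icc (0:ℝ) (Real.pi / 2) |
            tmat k lam * rotY θ * tmat k mu * rotY (-θ) ∈ conjClass k nu}).Nonempty ↔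
        |lam - mu| ≤ nu ∧ nu ≤ min (lam + mu) (2 * k - lam - mu)) := by
  have hkR : (0:ℝ) < k := by exact_mod_cast hk
  have hapos : 0 < Real.pi * lam / k := div_pos (mul_pos Real.pi_pos hlam.1) hkR
  have halt : Real.pi * lam / k < π := by
    rw [div_lt_iff₀ hkR]; nlinarith [Real.pi_pos, hlam.2]
  have hbpos : 0 < Real.pi * mu / k := div_pos (mul_pos Real.pi_pos hmu.1) hkR
  have hblt : Real.pi * mu / k < π := by
    rw [div_lt_iff₀ hkR]; nlinarith [Real.pi_pos, hmu.2]
  have hsina : 0 < Real.sin (Real.pi * lam / k) := Real.sin_pos_of_pos_of_lt_pi hapos halt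
  have hsinb : 0 < Real.sin (Real.pi * mu / k) := Real.sin_pos_of_pos_of_lt_pi hbpos hblt
  have hAB : Real.cos (Real.pi*lam/k + Real.pi*mu/k) < Real.cos (Real.pi*lam/k - Real.pi*mu/k) := by
    have hd : Real.cos (Real.pi*lam/k - Real.pi*mu/k) - Real.cos (Real.pi*lam/k + Real.pi*mu/k)
        = 2 * Real.sin (Real.pi*lam/k) * Real.sin (Real.pi*mu/k) := by
      rw [Real.cos_sub, Real.cos_add]; ring
    nlinarith
  have hnuIcc : Real.pi * nu / k ∈ Set.Icc (0:ℝ) π := by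
    constructor
    · exact div_nonneg (mul_nonneg Real.pi_pos.le hnu.1) hkR.le
    · rw [div_le_iff₀ hkR]; nlinarith [Real.pi_pos, hnu.2]
  have hdiv : ∀ u v : ℝ, Real.pi * u / k ≤ Real.pi * v / k ↔ u ≤ v := by
    intro u v
    rw [div_le_div_iff₀ hkR hkR, mul_le_mul_iff_left₀ hkR, mul_le_mul_iff_right₀ Real.pi_pos]
  have hCB : Real.cos (Real.pi*nu/k) ≤ Real.cos (Real.pi*lam/k - Real.pi*mu/k) ↔
      |lam - mu| ≤ nu := by
    have e1 : Real.cos (Real.pi*lam/k - Real.pi*mu/k) = Real.cos (Real.pi * |lam - mu| / k) := by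
      rw [← Real.cos_abs (Real.pi*lam/k - Real.pi*mu/k)]
      congr 1
      rw [show Real.pi*lam/k - Real.pi*mu/k = Real.pi*(lam-mu)/(k:ℝ) by ring,
        abs_div, abs_mul, abs_of_pos Real.pi_pos, abs_of_pos hkR]
    have hmem1 : Real.pi * |lam - mu| / k ∈ Set.Icc (0:ℝ) π := by
      constructor
      · positivity
      · rw [div_le_iff₀ hkR]
        have : |lam - mu| ≤ k := by
          rw [abs_le]; constructor <;> [linarith [hlam.1, hmu.2]; linarith [hlam.2, hmu.1]]
        nlinarith [Real.pi_pos]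
    rw [e1, Real.strictAntiOn_cos.le_iff_ge hnuIcc hmem1, hdiv]
  have hAC : Real.cos (Real.pi*lam/k + Real.pi*mu/k) ≤ Real.cos (Real.pi*nu/k) ↔
      nu ≤ min (lam + mu) (2 * k - lam - mu) := by
    have hm1 : (0:ℝ) < min (lam + mu) (2 * k - lam - mu) :=
      lt_min (by linarith [hlam.1, hmu.1]) (by linarith [hlam.2, hmu.2])
    have hm2 : min (lam + mu) (2 * k - lam - mu) ≤ k := by
      rcases le_total (lam + mu) (k:ℝ) with h | h
      · exact le_trans (min_le_left _ _) h
      · exact le_trans (min_le_right _ _) (by linarith)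
    have e2 : Real.cos (Real.pi*lam/k + Real.pi*mu/k) =
        Real.cos (Real.pi * min (lam + mu) (2 * k - lam - mu) / k) := by
      rcases le_total (lam + mu) (2 * k - lam - mu) with h | h
      · rw [min_eq_left h]; congr 1; ring
      · rw [min_eq_right h, ← Real.cos_two_pi_sub]
        congr 1
        field_simp
        ring
    have hmemm : Real.pi * min (lam + mu) (2 * k - lam - mu) / k ∈ Set.Icc (0:ℝ) π := by
      constructor
      · exact div_nonneg (mul_nonneg Real.pi_pos.le hm1.le) hkR.le
      · rw [div_le_iff₀ hkR]; nlinarith [Real.pi_pos]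
    rw [e2, Real.strictAntiOn_cos.le_iff_ge hmemm hnuIcc, hdiv]
  have hset : {θ ∈ Set.Icc (0:ℝ) (Real.pi / 2) |
      tmat k lam * rotY θ * tmat k mu * rotY (-θ) ∈ conjClass k nu} =
      {θ ∈ Set.Icc (0:ℝ) (π/2) |
        Real.cos (Real.pi*lam/k + Real.pi*mu/k) * Real.cos θ^2 +
          Real.cos (Real.pi*lam/k - Real.pi*mu/k) * Real.sin θ^2 = Real.cos (Real.pi*nu/k)} := by
    ext θ
    simp only [Set.mem_setOf_eq]
    exact and_congr_right fun _ => mem_iff k hk lam mu nu θ hnu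
  obtain ⟨hsub, hne⟩ := real_part (Real.cos (Real.pi*lam/k + Real.pi*mu/k))
    (Real.cos (Real.pi*lam/k - Real.pi*mu/k)) (Real.cos (Real.pi*nu/k)) hAB
  rw [hset]
  refine ⟨hsub, hne.trans ?_⟩
  constructor
  · rintro ⟨h1, h2⟩
    exact ⟨hCB.mp h2, hAC.mp h1⟩
  · rintro ⟨h1, h2⟩
    exact ⟨hAC.mpr h2, hCB.mpr h1⟩
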